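/- Assume that π₁ⁿ, π₂ⁿ ∈ Π^| satisfy π₁ⁿ ◁ π₂ⁿ for all n, and that πᵢⁿ → πᵢ as n → ∞ (i = 1,2) in the M1 topology for some π₁, π₂ ∈ Π^|. Then L°(π₁) ∩ R̄(π₂) = ∅ and L̄(π₁) ∩ R°(π₂) = ∅. -/

import Mathlib

noncomputable section

open Set Filter Topology MeasureTheory

namespace PathsPaper

/-- `tanh` extended to `EReal`, with `tanh (±∞) := ±1`. -/
def etanh (x : EReal) : ℝ :=
  if x = ⊤ then 1 else if x = ⊥ then -1 else Real.tanh x.toReal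

/-- The squeezed space `ℝ²_c = (ℝ̄ × ℝ) ∪ {(∗,−∞), (∗,+∞)}`; here `Sum.inr false`
represents `(∗,−∞)` and `Sum.inr true` represents `(∗,+∞)`. -/
abbrev Rsq := (EReal × ℝ) ⊕ Bool

/-- The embedding `Θ` of the squeezed space into `ℝ²`. -/
def theta : Rsq → ℝ × ℝ
  | Sum.inl p => (etanh p.1 / (1 + |p.2|), Real.tanh p.2)
  | Sum.inr b => (0, if b then 1 else -1)

/-- The metric `d_sqz` on the squeezed space (Euclidean distance of the `Θ`-images). -/
def dSqz (z z' : Rsq) : ℝ :=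
  Real.sqrt (((theta z).1 - (theta z').1) ^ 2 + ((theta z).2 - (theta z').2) ^ 2)

/-- A path: a closed time domain `I ⊆ ℝ` together with a left value function `l = π(·−)`
and a right value function `r = π(·+)` with values in `ℝ̄ = EReal`, such that `r` is
right-continuous along `I`, `l` is left-continuous along `I`, `l t = lim_{s↑t, s∈I} r s`
whenever `t` is a left accumulation point of `I`, and `r t = lim_{s↓t, s∈I} l s` whenever
`t` is a right accumulation point of `I`.  (The values outside `I` are normalised to `0`
so that a path is determined by its values on `I`.) -/
structure PathSp where
  I : Set ℝ
  closed_I : IsClosed I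
  l : ℝ → EReal
  r : ℝ → EReal
  l_default : ∀ t, t ∉ I → l t = 0
  r_default : ∀ t, t ∉ I → r t = 0
  right_cont : ∀ t ∈ I, Tendsto r (𝓝[I ∩ Ioi t] t) (𝓝 (r t))
  left_cont : ∀ t ∈ I, Tendsto l (𝓝[I ∩ Iio t] t) (𝓝 (l t))
  left_lim : ∀ t ∈ I, Tendsto r (𝓝[I ∩ Iio t] t) (𝓝 (l t))
  right_lim : ∀ t ∈ I, Tendsto l (𝓝[I ∩ Ioi t] t) (𝓝 (r t))

/-- The closed graph of a path, a subset of `S = ℝ̄ × ℝ`. -/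
def graph (π : PathSp) : Set (EReal × ℝ) :=
  {p | p.2 ∈ π.I ∧ (p.1 = π.l p.2 ∨ p.1 = π.r p.2)}

/-- The filled graph of a path. -/
def fgraph (π : PathSp) : Set (EReal × ℝ) :=
  {p | p.2 ∈ π.I ∧ p.1 ∈ uIcc (π.l p.2) (π.r p.2)}

/-- The strict total order `≺` on the (filled) graph of `π`: `(x,s) ≺ (y,t)` iff `s < t`,
or `s = t` and `x ≠ y` and `x` lies between `π(t−)` and `y`. -/
def gLt (π : PathSp) (p q : EReal × ℝ) : Prop :=
  p.2 < q.2 ∨ (p.2 = q.2 ∧ p.1 ≠ q.1 ∧ p.1 ∈ uIcc (π.l q.2) q.1)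

/-- The total order `⪯` on the (filled) graph of `π`. -/
def gLe (π : PathSp) (p q : EReal × ℝ) : Prop := p = q ∨ gLt π p q

/-- `π∗` (resp. `π̄∗`): a graph together with the two points at infinity of the squeezed
space. -/
def starSet (G : Set (EReal × ℝ)) : Set Rsq :=
  (Sum.inl '' G) ∪ {Sum.inr false, Sum.inr true}

/-- The order `≺` extended to the squeezed space, `(∗,−∞)` minimal, `(∗,+∞)` maximal. -/
def sLt (π : PathSp) : Rsq → Rsq → Prop
  | Sum.inl p, Sum.inl q => gLt π p q
  | Sum.inl _, Sum.inr b => b = true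
  | Sum.inr b, Sum.inl _ => b = false
  | Sum.inr b, Sum.inr b' => b = false ∧ b' = true

/-- `C` is a correspondence between `A` and `B`. -/
def IsCorr (A B : Set Rsq) (C : Set (Rsq × Rsq)) : Prop :=
  C ⊆ A ×ˢ B ∧ (∀ a ∈ A, ∃ b ∈ B, (a, b) ∈ C) ∧ (∀ b ∈ B, ∃ a ∈ A, (a, b) ∈ C)

/-- A correspondence is monotone if it contains no pair of order-violating elements. -/
def IsMono (π₁ π₂ : PathSp) (C : Set (Rsq × Rsq)) : Prop :=
  ¬ ∃ z ∈ C, ∃ z' ∈ C, sLt π₁ z.1 z'.1 ∧ sLt π₂ z'.2 z.2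

def corrSup (C : Set (Rsq × Rsq)) : ℝ := sSup ((fun z : Rsq × Rsq => dSqz z.1 z.2) '' C)

/-- The Skorohod J1 metric on the path space. -/
def dJ1 (π₁ π₂ : PathSp) : ℝ :=
  sInf {h | ∃ C, IsCorr (starSet (graph π₁)) (starSet (graph π₂)) C ∧ IsMono π₁ π₂ C ∧
    h = corrSup C}

/-- The Skorohod M1 metric on the path space. -/
def dM1 (π₁ π₂ : PathSp) : ℝ :=
  sInf {h | ∃ C, IsCorr (starSet (fgraph π₁)) (starSet (fgraph π₂)) C ∧ IsMono π₁ π₂ C ∧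
    h = corrSup C}

/-- The topology generated by the open balls of a distance function (for a metric, this
is the metric topology). -/
def ballTop {X : Type*} (d : X → X → ℝ) : TopologicalSpace X :=
  TopologicalSpace.generateFrom {U | ∃ x ε, 0 < ε ∧ U = {y | d x y < ε}}

/-- The J1 topology on the path space. -/
def J1Top : TopologicalSpace PathSp := ballTop dJ1

/-- The M1 topology on the path space. -/
def M1Top : TopologicalSpace PathSp := ballTop dM1

/-- Convergence of a sequence of paths in the J1 topology. -/
def J1Conv (πn : ℕ → PathSp) (π : PathSp) : Prop :=
  Tendsto (fun n => dJ1 (πn n) π) atTop (𝓝 0)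

/-- Convergence of a sequence of paths in the M1 topology. -/
def M1Conv (πn : ℕ → PathSp) (π : PathSp) : Prop :=
  Tendsto (fun n => dM1 (πn n) π) atTop (𝓝 0)

/-- The Hausdorff distance between two sets associated with a distance function `d`. -/
def hausDist {X : Type*} (d : X → X → ℝ) (A B : Set X) : ℝ :=
  max (sSup ((fun a => sInf ((fun b => d a b) '' B)) '' A))
      (sSup ((fun b => sInf ((fun a => d a b) '' A)) '' B))

/-- `K_+(X)`: the nonempty compact subsets of a topological space. -/
def KP {X : Type*} (τ : TopologicalSpace X) : Type _ :=
  {A : Set X // @IsCompact X τ A ∧ A.Nonempty}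

/-- The Hausdorff topology on `K_+(X)`, from a metric `d` generating `τ`. -/
def KPtop {X : Type*} (τ : TopologicalSpace X) (d : X → X → ℝ) : TopologicalSpace (KP τ) :=
  ballTop (fun A B => hausDist d A.1 B.1)

/-- Tightness of the laws of a family of random variables `A γ` with values in a space `K`
equipped with a topology `τK`: for every `ε > 0` there is a compact `C ⊆ K` whose
complement has probability at most `ε` for every `γ`. -/
def Tight {Γ : Type*} {K : Type*} (τK : TopologicalSpace K)
    {Ω : Γ → Type*} [∀ γ, MeasurableSpace (Ω γ)]
    (P : ∀ γ, Measure (Ω γ)) (A : ∀ γ, Ω γ → K) : Prop :=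
  ∀ ε : ℝ, 0 < ε → ∃ C : Set K, @IsCompact K τK C ∧
    ∀ γ, P γ {ω | A γ ω ∉ C} ≤ ENNReal.ofReal ε

/-- `Δ²_{T,δ}(π)`. -/
def Delta2 (π : PathSp) (T δ : ℝ) : Set (EReal × EReal) :=
  {p | ∃ s t : ℝ, -T ≤ s ∧ s ≤ t ∧ t ≤ T ∧ t - s ≤ δ ∧
    (p.1, s) ∈ graph π ∧ (p.2, t) ∈ graph π ∧ gLe π (p.1, s) (p.2, t)}

/-- `Δ³_{T,δ}(π)`. -/
def Delta3 (π : PathSp) (T δ : ℝ) : Set (EReal × EReal × EReal) :=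
  {p | ∃ s t u : ℝ, -T ≤ s ∧ s ≤ t ∧ t ≤ u ∧ u ≤ T ∧ u - s ≤ δ ∧
    (p.1, s) ∈ graph π ∧ (p.2.1, t) ∈ graph π ∧ (p.2.2, u) ∈ graph π ∧
    gLe π (p.1, s) (p.2.1, t) ∧ gLe π (p.2.1, t) (p.2.2, u)}

/-- `S⁺_{T,δ,ε,r}`. -/
def Splus (T δ ε r : ℝ) : Set PathSp :=
  {π | ∃ x y : EReal, (x, y) ∈ Delta2 π T δ ∧ x ≤ (r : EReal) ∧ ((r + ε : ℝ) : EReal) ≤ y}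

/-- `S⁻_{T,δ,ε,r}`. -/
def Sminus (T δ ε r : ℝ) : Set PathSp :=
  {π | ∃ x y : EReal, (x, y) ∈ Delta2 π T δ ∧ y ≤ (r : EReal) ∧ ((r + ε : ℝ) : EReal) ≤ x}

/-- `S²_{T,δ,ε,r}`. -/
def S2 (T δ ε r : ℝ) : Set PathSp := Splus T δ ε r ∪ Sminus T δ ε r

/-- `S^{+−}_{T,δ,ε,r}`. -/
def Spm (T δ ε r : ℝ) : Set PathSp :=
  {π | ∃ x y z : EReal, (x, y, z) ∈ Delta3 π T δ ∧
    x ≤ (r : EReal) ∧ z ≤ (r : EReal) ∧ ((r + ε : ℝ) : EReal) ≤ y}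

/-- `S^{−+}_{T,δ,ε,r}`. -/
def Smp (T δ ε r : ℝ) : Set PathSp :=
  {π | ∃ x y z : EReal, (x, y, z) ∈ Delta3 π T δ ∧
    y ≤ (r : EReal) ∧ ((r + ε : ℝ) : EReal) ≤ x ∧ ((r + ε : ℝ) : EReal) ≤ z}

/-- `S^{++}_{T,δ,ε,r}`. -/
def Spp (T δ ε r : ℝ) : Set PathSp :=
  {π | ∃ x y z : EReal, (x, y, z) ∈ Delta3 π T δ ∧
    x ≤ (r : EReal) ∧ ((r + ε : ℝ) : EReal) ≤ y ∧ y ≤ ((r + 2 * ε : ℝ) : EReal) ∧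
    ((r + 3 * ε : ℝ) : EReal) ≤ z}

/-- `S^{−−}_{T,δ,ε,r}`. -/
def Smm (T δ ε r : ℝ) : Set PathSp :=
  {π | ∃ x y z : EReal, (x, y, z) ∈ Delta3 π T δ ∧
    z ≤ (r : EReal) ∧ ((r + ε : ℝ) : EReal) ≤ y ∧ y ≤ ((r + 2 * ε : ℝ) : EReal) ∧
    ((r + 3 * ε : ℝ) : EReal) ≤ x}

/-- `S^J_{T,δ,ε,r}`. -/
def SJ (T δ ε r : ℝ) : Set PathSp := Spp T δ ε r ∪ Smm T δ ε r

/-- `S^M_{T,δ,ε,r}`. -/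
def SM (T δ ε r : ℝ) : Set PathSp := Spm T δ ε r ∪ Smp T δ ε r

/-- `Δ²_{T,δ}(π₁,π₂)` for a pair of paths. -/
def Delta2Pair (π₁ π₂ : PathSp) (T δ : ℝ) : Set (EReal × EReal × EReal × EReal) :=
  {q | ∃ s₁ t₁ s₂ t₂ : ℝ,
    -T ≤ s₁ ∧ s₁ ≤ t₁ ∧ t₁ ≤ T ∧ -T ≤ s₂ ∧ s₂ ≤ t₂ ∧ t₂ ≤ T ∧
    (q.1, s₁) ∈ graph π₁ ∧ (q.2.1, t₁) ∈ graph π₁ ∧ gLe π₁ (q.1, s₁) (q.2.1, t₁) ∧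
    (q.2.2.1, s₂) ∈ graph π₂ ∧ (q.2.2.2, t₂) ∈ graph π₂ ∧
    gLe π₂ (q.2.2.1, s₂) (q.2.2.2, t₂) ∧
    max t₁ t₂ - min s₁ s₂ ≤ δ}

/-- `C^M_{T,δ,ε,r}`. -/
def CM (T δ ε r : ℝ) : Set (PathSp × PathSp) :=
  {pp | ∃ x₁ y₁ x₂ y₂ : EReal, (x₁, y₁, x₂, y₂) ∈ Delta2Pair pp.1 pp.2 T δ ∧
    x₁ ≤ (r : EReal) ∧ y₂ ≤ (r : EReal) ∧
    ((r + ε : ℝ) : EReal) ≤ y₁ ∧ ((r + ε : ℝ) : EReal) ≤ x₂}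

/-- `φ(x) = x/√(1+x²)` extended to `ℝ̄`. -/
def phiR (x : EReal) : ℝ :=
  if x = ⊤ then 1 else if x = ⊥ then -1 else x.toReal / Real.sqrt (1 + x.toReal ^ 2)

/-- The metric `d_ℝ̄` on `ℝ̄`. -/
def dR (x y : EReal) : ℝ := |phiR x - phiR y|

/-- The modulus of continuity `m_{T,δ}(π)`. -/
def modC (π : PathSp) (T δ : ℝ) : ℝ :=
  sSup {h | ∃ x y : EReal, (x, y) ∈ Delta2 π T δ ∧ h = dR x y}

/-- The modulus `m^J_{T,δ}(π)`. -/
def modJ (π : PathSp) (T δ : ℝ) : ℝ :=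
  sSup {h | ∃ x y z : EReal, (x, y, z) ∈ Delta3 π T δ ∧ h = min (dR y x) (dR y z)}

/-- The modulus `m^M_{T,δ}(π)`. -/
def modM (π : PathSp) (T δ : ℝ) : ℝ :=
  sSup {h | ∃ x y z : EReal, (x, y, z) ∈ Delta3 π T δ ∧
    h = sInf ((fun w => dR y w) '' uIcc x z)}

/-- `T²_{T,δ,η}`. -/
def T2set (T δ η : ℝ) : Set PathSp :=
  {π | ∃ x y : EReal, (x, y) ∈ Delta2 π T δ ∧ dR x y > η}

/-- `T⁺_{T,δ,η}`. -/
def Tplus (T δ η : ℝ) : Set PathSp :=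
  {π | ∃ x y : EReal, (x, y) ∈ Delta2 π T δ ∧ x < y ∧ dR x y > η}

/-- `T⁻_{T,δ,η}`. -/
def Tminus (T δ η : ℝ) : Set PathSp :=
  {π | ∃ x y : EReal, (x, y) ∈ Delta2 π T δ ∧ y < x ∧ dR x y > η}

/-- `T^{++}_{T,δ,η}`. -/
def Tpp (T δ η : ℝ) : Set PathSp :=
  {π | ∃ x y z : EReal, (x, y, z) ∈ Delta3 π T δ ∧ x < y ∧ y < z ∧
    dR x y > η ∧ dR y z > η}

/-- `T^{+−}_{T,δ,η}`. -/
def Tpm (T δ η : ℝ) : Set PathSp :=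
  {π | ∃ x y z : EReal, (x, y, z) ∈ Delta3 π T δ ∧ x < y ∧ z < y ∧
    dR x y > η ∧ dR y z > η}

/-- `T^{−+}_{T,δ,η}`. -/
def Tmp (T δ η : ℝ) : Set PathSp :=
  {π | ∃ x y z : EReal, (x, y, z) ∈ Delta3 π T δ ∧ y < x ∧ y < z ∧
    dR x y > η ∧ dR y z > η}

/-- `T^{−−}_{T,δ,η}`. -/
def Tmm (T δ η : ℝ) : Set PathSp :=
  {π | ∃ x y z : EReal, (x, y, z) ∈ Delta3 π T δ ∧ y < x ∧ z < y ∧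
    dR x y > η ∧ dR y z > η}

/-- `T^J_{T,δ,η}`. -/
def TJ (T δ η : ℝ) : Set PathSp := Tpp T δ η ∪ Tmm T δ η

/-- `T^M_{T,δ,η}`. -/
def TM (T δ η : ℝ) : Set PathSp := Tpm T δ η ∪ Tmp T δ η

/-- A continuous path. -/
def IsContP (π : PathSp) : Prop := ∀ t ∈ π.I, π.l t = π.r t

/-- The space `Π_c` of continuous paths. -/
def PathC : Type := {π : PathSp // IsContP π}

/-- The (J1 = M1) metric on `Π_c`. -/
def dC (π₁ π₂ : PathC) : ℝ := dJ1 π₁.1 π₂.1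

/-- The topology on `Π_c`. -/
def CTop : TopologicalSpace PathC := ballTop dC

/-- A connected path: the domain is an interval. -/
def IsConn (π : PathSp) : Prop := π.I.OrdConnected

/-- A bi-infinite path: the domain is all of `ℝ`. -/
def IsBiInf (π : PathSp) : Prop := π.I = univ

/-- `π'` extends `π`. -/
def ExtendsP (π' π : PathSp) : Prop := fgraph π ⊆ fgraph π'

/-- The relation `π₁ ◁ π₂`. -/
def OrdBelow (π₁ π₂ : PathSp) : Prop :=
  ∃ π₁' π₂' : PathSp, IsBiInf π₁' ∧ IsBiInf π₂' ∧ ExtendsP π₁' π₁ ∧ ExtendsP π₂' π₂ ∧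
    ∀ t : ℝ, π₁'.l t ≤ π₂'.l t ∧ π₁'.r t ≤ π₂'.r t

/-- A noncrossing set of paths. -/
def Noncrossing (A : Set PathSp) : Prop :=
  ∀ π₁ ∈ A, ∀ π₂ ∈ A, OrdBelow π₁ π₂ ∨ OrdBelow π₂ π₁

/-- `π₁` crosses `π₂`. -/
def Crosses (π₁ π₂ : PathSp) : Prop := ¬ OrdBelow π₁ π₂ ∧ ¬ OrdBelow π₂ π₁

/-- `π₁` collides with `π₂` at time `t`: at time `t` the two paths jump over some
interval in opposite directions. -/
def CollidesAt (π₁ π₂ : PathSp) (t : ℝ) : Prop :=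
  t ∈ π₁.I ∧ t ∈ π₂.I ∧
  ((π₁.r t < π₁.l t ∧ π₁.r t < π₂.r t ∧ π₂.l t < π₁.l t ∧ π₂.l t < π₂.r t) ∨
   (π₁.l t < π₁.r t ∧ π₁.l t < π₂.l t ∧ π₂.r t < π₁.r t ∧ π₂.r t < π₂.l t))

/-- `∂I`: the finite boundary points of the domain of `π`. -/
def bdryI (π : PathSp) : Set ℝ := π.I \ interior π.I

/-- `t` is the (finite) minimum of `I`. -/
def IsMinOf (I : Set ℝ) (t : ℝ) : Prop := t ∈ I ∧ ∀ s ∈ I, t ≤ s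

/-- `t` is the (finite) maximum of `I`. -/
def IsMaxOf (I : Set ℝ) (t : ℝ) : Prop := t ∈ I ∧ ∀ s ∈ I, s ≤ t

/-- `∂⁻I`, the set of finite lower boundary points. -/
def bdryMinus (I : Set ℝ) : Set ℝ := {t | IsMinOf I t}

/-- `∂⁺I`, the set of finite upper boundary points. -/
def bdryPlus (I : Set ℝ) : Set ℝ := {t | IsMaxOf I t}

/-- Evaluation of a path at a point `t±` of the split real line; `(t, false)` stands
for `t−` and `(t, true)` for `t+`. -/
def pev (π : PathSp) (tb : ℝ × Bool) : EReal := if tb.2 then π.r tb.1 else π.l tb.1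

/-- `I^𝔰_π`: points `t±` with `t ∈ I_π`, excluding `s−` and `u+` where `s, u` are the
initial and final times. -/
def Isplit (π : PathSp) : Set (ℝ × Bool) :=
  {tb | tb.1 ∈ π.I ∧ ¬ (tb.2 = false ∧ IsMinOf π.I tb.1) ∧ ¬ (tb.2 = true ∧ IsMaxOf π.I tb.1)}

/-- `I^l_π`. -/
def Il (π : PathSp) : Set (ℝ × Bool) :=
  Isplit π ∪ {tb | tb.2 = false ∧ IsMinOf π.I tb.1 ∧ π.r tb.1 < π.l tb.1}
    ∪ {tb | tb.2 = true ∧ IsMaxOf π.I tb.1 ∧ π.l tb.1 < π.r tb.1}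

/-- `I^r_π`. -/
def Ir (π : PathSp) : Set (ℝ × Bool) :=
  Isplit π ∪ {tb | tb.2 = false ∧ IsMinOf π.I tb.1 ∧ π.l tb.1 < π.r tb.1}
    ∪ {tb | tb.2 = true ∧ IsMaxOf π.I tb.1 ∧ π.r tb.1 < π.l tb.1}

/-- `L(π)`. -/
def Lset (π : PathSp) : Set (EReal × ℝ × Bool) := {p | p.2 ∈ Il π ∧ p.1 < pev π p.2}

/-- `R(π)`. -/
def Rset (π : PathSp) : Set (EReal × ℝ × Bool) := {p | p.2 ∈ Ir π ∧ pev π p.2 < p.1}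

/-- `L°(π)`. -/
def Lo (π : PathSp) : Set (EReal × ℝ) :=
  {p | p.2 ∈ interior π.I ∧ p.1 < min (π.l p.2) (π.r p.2)}

/-- `L̄(π)`. -/
def Lbar (π : PathSp) : Set (EReal × ℝ) :=
  {p | p.2 ∈ π.I ∧ p.1 ≤ max (π.l p.2) (π.r p.2)}

/-- `L^c(π) = S ∖ L°(π)`. -/
def Lc (π : PathSp) : Set (EReal × ℝ) := (Lo π)ᶜ

/-- `R°(π)`. -/
def Ro (π : PathSp) : Set (EReal × ℝ) :=
  {p | p.2 ∈ interior π.I ∧ max (π.l p.2) (π.r p.2) < p.1}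

/-- `R̄(π)`. -/
def Rbar (π : PathSp) : Set (EReal × ℝ) :=
  {p | p.2 ∈ π.I ∧ min (π.l p.2) (π.r p.2) ≤ p.1}

/-- `π^⟨2⟩`: the ordered pairs of points of the closed graph. -/
def gr2 (π : PathSp) : Set ((EReal × ℝ) × (EReal × ℝ)) :=
  {q | q.1 ∈ graph π ∧ q.2 ∈ graph π ∧ gLe π q.1 q.2}

/-- `π̄^⟨2⟩`: the ordered pairs of points of the filled graph. -/
def fgr2 (π : PathSp) : Set ((EReal × ℝ) × (EReal × ℝ)) :=
  {q | q.1 ∈ fgraph π ∧ q.2 ∈ fgraph π ∧ gLe π q.1 q.2}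

/-- Convergence `A_n → B` of closed subsets of `Y` in the local Hausdorff topology,
expressed through its standard sequential characterisation (Lemma 2.2 of the paper,
which also shows this is independent of the choice of metric): every point of `B` is a
limit of points of `A_{n,∞} = A_n ∪ {∞}` in the one-point compactification, and every
cluster point in `Y` of such a sequence lies in `B`. -/
def LHConv {Y : Type*} [TopologicalSpace Y] (A : ℕ → Set Y) (B : Set Y) : Prop :=
  (∀ x ∈ B, ∃ u : ℕ → OnePoint Y,
    (∀ n, u n ∈ insert OnePoint.infty ((fun y : Y => (y : OnePoint Y)) '' A n)) ∧
      Tendsto u atTop (𝓝 (x : OnePoint Y))) ∧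
  (∀ x : Y, (∃ u : ℕ → OnePoint Y,
    (∀ n, u n ∈ insert OnePoint.infty ((fun y : Y => (y : OnePoint Y)) '' A n)) ∧
      MapClusterPt (x : OnePoint Y) atTop u) → x ∈ B)

/-- Convergence of compact sets of paths in the Hausdorff "metric" associated to `dM1`. -/
def HausConvM1 (A : ℕ → Set PathSp) (B : Set PathSp) : Prop :=
  Tendsto (fun n => hausDist dM1 (A n) B) atTop (𝓝 0)


set_option maxHeartbeats 1600000
lemma tanh_lt_one (x : ℝ) : Real.tanh x < 1 := by
  rw [Real.tanh_eq_sinh_div_cosh, div_lt_one (Real.cosh_pos x), Real.sinh_eq, Real.cosh_eq]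
  have := Real.exp_pos (-x); linarith

lemma neg_one_lt_tanh (x : ℝ) : -1 < Real.tanh x := by
  rw [Real.tanh_eq_sinh_div_cosh, lt_div_iff₀ (Real.cosh_pos x), Real.sinh_eq, Real.cosh_eq]
  have := Real.exp_pos x; linarith

lemma abs_tanh_lt_one (x : ℝ) : |Real.tanh x| < 1 :=
  abs_lt.2 ⟨neg_one_lt_tanh x, tanh_lt_one x⟩

lemma tanh_strictMono : StrictMono Real.tanh := by
  intro x y h
  rw [Real.tanh_eq_sinh_div_cosh, Real.tanh_eq_sinh_div_cosh,
    div_lt_div_iff₀ (Real.cosh_pos x) (Real.cosh_pos y)]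
  have h1 : Real.sinh (x - y) < 0 := by
    rw [show (0:ℝ) = Real.sinh 0 by simp]
    exact Real.sinh_lt_sinh.2 (by linarith)
  rw [Real.sinh_sub] at h1
  linarith

lemma le_of_tanh_le {a b : ℝ} (h : Real.tanh a ≤ Real.tanh b) : a ≤ b :=
  tanh_strictMono.le_iff_le.1 h

lemma abs_tanh_le_tanh_abs (x : ℝ) : |Real.tanh x| ≤ Real.tanh |x| := by
  rcases le_or_gt 0 x with h | h
  · rw [abs_of_nonneg h, abs_of_nonneg]
    rw [show (0:ℝ) = Real.tanh 0 by simp]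
    exact tanh_strictMono.monotone h
  · have hx : Real.tanh x < 0 := by
      rw [show (0:ℝ) = Real.tanh 0 by simp]; exact tanh_strictMono h
    rw [abs_of_neg h, abs_of_neg hx, ← Real.tanh_neg]

@[simp] lemma etanh_coe (c : ℝ) : etanh (c : EReal) = Real.tanh c := by
  simp [etanh]

@[simp] lemma etanh_top : etanh ⊤ = 1 := by simp [etanh]
@[simp] lemma etanh_bot : etanh ⊥ = -1 := by simp [etanh]

lemma abs_etanh_le_one (x : EReal) : |etanh x| ≤ 1 := by
  induction x using EReal.rec with
  | bot => simp
  | coe a => simp [(abs_tanh_lt_one a).le]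
  | top => simp

lemma etanh_mono : Monotone etanh := by
  intro x y h
  induction x using EReal.rec with
  | bot =>
    induction y using EReal.rec with
    | bot => simp
    | coe b => simpa using (neg_one_lt_tanh b).le
    | top => simp
  | coe a =>
    induction y using EReal.rec with
    | bot => simp at h
    | coe b => simpa using tanh_strictMono.monotone (EReal.coe_le_coe_iff.1 h)
    | top => simpa using (tanh_lt_one a).le
  | top =>
    induction y using EReal.rec with
    | bot => simp at h
    | coe b => simp at h
    | top => simp

lemma etanh_lt_tanh_of_lt {x : EReal} {c : ℝ} (h : x < (c : EReal)) : etanh x < Real.tanh c := by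
  induction x using EReal.rec with
  | bot => simpa using neg_one_lt_tanh c
  | coe a => simpa using tanh_strictMono (EReal.coe_lt_coe_iff.1 h)
  | top => simp at h
    
lemma tanh_lt_etanh_of_lt {x : EReal} {c : ℝ} (h : (c : EReal) < x) : Real.tanh c < etanh x := by
  induction x using EReal.rec with
  | bot => simp at h
  | coe a => simpa using tanh_strictMono (EReal.coe_lt_coe_iff.1 h)
  | top => simpa using tanh_lt_one c

lemma lt_coe_of_etanh_lt {x : EReal} {c : ℝ} (h : etanh x < Real.tanh c) : x < (c : EReal) := by
  by_contra h'
  push_neg at h'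
  rcases eq_or_lt_of_le h' with h'' | h''
  · rw [← h''] at h; simp at h
  · exact absurd (tanh_lt_etanh_of_lt h'') (by linarith)

lemma coe_lt_of_tanh_lt_etanh {x : EReal} {c : ℝ} (h : Real.tanh c < etanh x) : (c : EReal) < x := by
  by_contra h'
  push_neg at h'
  rcases eq_or_lt_of_le h' with h'' | h''
  · rw [h''] at h; simp at h
  · exact absurd (etanh_lt_tanh_of_lt h'') (by linarith)

lemma dSqz_nonneg (z z' : Rsq) : 0 ≤ dSqz z z' := Real.sqrt_nonneg _

lemma abs_fst_le_dSqz (z z' : Rsq) : |(theta z).1 - (theta z').1| ≤ dSqz z z' := by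
  rw [← Real.sqrt_sq_eq_abs]
  exact Real.sqrt_le_sqrt (by nlinarith [sq_nonneg ((theta z).2 - (theta z').2)])

lemma abs_snd_le_dSqz (z z' : Rsq) : |(theta z).2 - (theta z').2| ≤ dSqz z z' := by
  rw [← Real.sqrt_sq_eq_abs]
  exact Real.sqrt_le_sqrt (by nlinarith [sq_nonneg ((theta z).1 - (theta z').1)])

lemma theta_fst_abs_le (z : Rsq) : |(theta z).1| ≤ 1 := by
  match z with
  | Sum.inl p =>
    have h1 : (0:ℝ) < 1 + |p.2| := by positivity
    simp only [theta]
    rw [abs_div, abs_of_pos h1, div_le_one h1]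
    exact (abs_etanh_le_one p.1).trans (by simp [abs_nonneg])
  | Sum.inr b => simp [theta]

lemma theta_snd_abs_le (z : Rsq) : |(theta z).2| ≤ 1 := by
  match z with
  | Sum.inl p => exact (abs_tanh_lt_one p.2).le
  | Sum.inr b => cases b <;> simp [theta]

lemma dSqz_le_three (z z' : Rsq) : dSqz z z' ≤ 3 := by
  have h1 := theta_fst_abs_le z; have h2 := theta_fst_abs_le z'
  have h3 := theta_snd_abs_le z; have h4 := theta_snd_abs_le z'
  rw [abs_le] at h1 h2 h3 h4
  have : ((theta z).1 - (theta z').1) ^ 2 + ((theta z).2 - (theta z').2) ^ 2 ≤ 9 := by nlinarith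
  calc dSqz z z' ≤ Real.sqrt 9 := Real.sqrt_le_sqrt this
    _ = 3 := by rw [show (9:ℝ) = 3 ^ 2 by norm_num, Real.sqrt_sq (by norm_num)]

lemma dSqz_comm (z z' : Rsq) : dSqz z z' = dSqz z' z := by
  unfold dSqz; ring_nf

lemma dSqz_inl_est {w v : EReal} {s u ε : ℝ}
    (h : dSqz (Sum.inl (w, s)) (Sum.inl (v, u)) ≤ ε) :
    |Real.tanh s - Real.tanh u| ≤ ε ∧ |etanh w - etanh v| ≤ (1 + |s|) * ε + |s - u| := by
  have h2 := (abs_snd_le_dSqz (Sum.inl (w, s)) (Sum.inl (v, u))).trans h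
  have h1 := (abs_fst_le_dSqz (Sum.inl (w, s)) (Sum.inl (v, u))).trans h
  simp only [theta] at h1 h2
  refine ⟨h2, ?_⟩
  have hs : (0:ℝ) < 1 + |s| := by positivity
  have hu : (0:ℝ) < 1 + |u| := by positivity
  set a := etanh w / (1 + |s|) with ha
  set b := etanh v / (1 + |u|) with hb
  have hw : etanh w = (1 + |s|) * a := by rw [ha]; field_simp
  have hv : etanh v = (1 + |u|) * b := by rw [hb]; field_simp
  have hb1 : |b| ≤ 1 := by
    rw [hb, abs_div, abs_of_pos hu, div_le_one hu]
    exact (abs_etanh_le_one v).trans (by simp [abs_nonneg])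
  have key : etanh w - etanh v = (1 + |s|) * (a - b) + (|s| - |u|) * b := by
    rw [hw, hv]; ring
  calc |etanh w - etanh v| = |(1 + |s|) * (a - b) + (|s| - |u|) * b| := by rw [key]
    _ ≤ |(1 + |s|) * (a - b)| + |(|s| - |u|) * b| := abs_add_le _ _
    _ = (1 + |s|) * |a - b| + |(|s| - |u|)| * |b| := by
        rw [abs_mul, abs_mul, abs_of_pos hs]
    _ ≤ (1 + |s|) * ε + |s - u| * 1 := by
        exact add_le_add (mul_le_mul_of_nonneg_left h1 hs.le)
          (mul_le_mul (abs_abs_sub_abs_le_abs_sub s u) hb1 (abs_nonneg _) (abs_nonneg _))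
    _ = (1 + |s|) * ε + |s - u| := by ring

lemma dSqz_inr_inl_ge {b : Bool} {v : EReal} {u : ℝ} :
    1 - |Real.tanh u| ≤ dSqz (Sum.inr b) (Sum.inl (v, u)) := by
  refine le_trans ?_ (abs_snd_le_dSqz (Sum.inr b) (Sum.inl (v, u)))
  simp only [theta]
  cases b
  · have := abs_sub_abs_le_abs_sub (-1 : ℝ) (Real.tanh u)
    simp only [abs_neg, abs_one] at this
    simpa using this
  · have := abs_sub_abs_le_abs_sub (1 : ℝ) (Real.tanh u)
    simp only [abs_one] at this
    simpa using this

lemma mem_starSet_inl {G : Set (EReal × ℝ)} {p : EReal × ℝ} :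
    Sum.inl p ∈ starSet G ↔ p ∈ G := by
  simp [starSet]

lemma inr_mem_starSet (G : Set (EReal × ℝ)) (b : Bool) : Sum.inr b ∈ starSet G := by
  cases b <;> simp [starSet]

def trivCorr (A B : Set Rsq) : Set (Rsq × Rsq) :=
  (A ×ˢ {Sum.inr true}) ∪ ({Sum.inr false} ×ˢ B)

lemma trivCorr_isCorr (G G' : Set (EReal × ℝ)) :
    IsCorr (starSet G) (starSet G') (trivCorr (starSet G) (starSet G')) := by
  refine ⟨?_, ?_, ?_⟩
  · rintro ⟨z1, z2⟩ (⟨h1, h2⟩ | ⟨h1, h2⟩)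
    · refine ⟨h1, ?_⟩
      simp only [mem_singleton_iff] at h2
      rw [h2]; exact inr_mem_starSet _ _
    · refine ⟨?_, h2⟩
      simp only [mem_singleton_iff] at h1
      rw [h1]; exact inr_mem_starSet _ _
  · intro a ha
    exact ⟨Sum.inr true, inr_mem_starSet _ _, Or.inl ⟨ha, rfl⟩⟩
  · intro b hb
    exact ⟨Sum.inr false, inr_mem_starSet _ _, Or.inr ⟨rfl, hb⟩⟩

lemma trivCorr_isMono (π₁ π₂ : PathSp) (A B : Set Rsq) :
    IsMono π₁ π₂ (trivCorr A B) := by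
  rintro ⟨⟨z1, z2⟩, hz, ⟨z1', z2'⟩, hz', hlt1, hlt2⟩
  rcases hz with ⟨h1, h2⟩ | ⟨h1, h2⟩ <;> rcases hz' with ⟨h1', h2'⟩ | ⟨h1', h2'⟩ <;>
    simp only [mem_singleton_iff] at h1 h2 h1' h2' ⊢
  · subst h2; subst h2'; simp [sLt] at hlt2
  · subst h2; subst h1'
    cases z1 <;> simp [sLt] at hlt1
  · subst h1; subst h2'
    cases z2 <;> simp [sLt] at hlt2
  · subst h1; subst h1'; simp [sLt] at hlt1

lemma le_corrSup {C : Set (Rsq × Rsq)} {z : Rsq × Rsq} (hz : z ∈ C) :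
    dSqz z.1 z.2 ≤ corrSup C :=
  le_csSup ⟨3, by rintro y ⟨w, hw, rfl⟩; exact dSqz_le_three _ _⟩ ⟨z, hz, rfl⟩

lemma corrSup_nonneg (C : Set (Rsq × Rsq)) : 0 ≤ corrSup C :=
  Real.sSup_nonneg (by rintro y ⟨w, hw, rfl⟩; exact dSqz_nonneg _ _)

lemma exists_corr_of_dM1_lt {π π' : PathSp} {ε : ℝ} (h : dM1 π π' < ε) :
    ∃ C, IsCorr (starSet (fgraph π)) (starSet (fgraph π')) C ∧
      ∀ z ∈ C, dSqz z.1 z.2 < ε := by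
  unfold dM1 at h
  have hne : {h | ∃ C, IsCorr (starSet (fgraph π)) (starSet (fgraph π')) C ∧ IsMono π π' C ∧
      h = corrSup C}.Nonempty :=
    ⟨corrSup (trivCorr (starSet (fgraph π)) (starSet (fgraph π'))),
      trivCorr _ _, trivCorr_isCorr _ _, trivCorr_isMono _ _ _ _, rfl⟩
  have hbdd : BddBelow {h | ∃ C, IsCorr (starSet (fgraph π)) (starSet (fgraph π')) C ∧
      IsMono π π' C ∧ h = corrSup C} :=
    ⟨0, by rintro y ⟨C, _, _, rfl⟩; exact corrSup_nonneg C⟩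
  obtain ⟨y, ⟨C, hC, _, rfl⟩, hy⟩ := (csInf_lt_iff hbdd hne).1 h
  exact ⟨C, hC, fun z hz => lt_of_le_of_lt (le_corrSup hz) hy⟩

lemma eventually_good_corr {πn : ℕ → PathSp} {π : PathSp} (h : M1Conv πn π) {ε : ℝ}
    (hε : 0 < ε) :
    ∀ᶠ n in atTop, ∃ C, IsCorr (starSet (fgraph (πn n))) (starSet (fgraph π)) C ∧
      ∀ z ∈ C, dSqz z.1 z.2 < ε :=
  (h.eventually_lt_const hε).mono fun _ hn => exists_corr_of_dM1_lt hn

lemma partner_B {π π' : PathSp} {C : Set (Rsq × Rsq)} {ε : ℝ}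
    (hC : IsCorr (starSet (fgraph π)) (starSet (fgraph π')) C)
    (hCs : ∀ z ∈ C, dSqz z.1 z.2 < ε)
    {v : EReal} {u : ℝ} (hq : (v, u) ∈ fgraph π')
    (hε : ε ≤ 1 - Real.tanh |u|) :
    ∃ w s, (w, s) ∈ fgraph π ∧ dSqz (Sum.inl (w, s)) (Sum.inl (v, u)) < ε := by
  obtain ⟨a, ha, haC⟩ := hC.2.2 (Sum.inl (v, u)) (mem_starSet_inl.2 hq)
  have hd := hCs _ haC
  match a, ha with
  | Sum.inl p, ha => exact ⟨p.1, p.2, mem_starSet_inl.1 ha, hd⟩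
  | Sum.inr b, _ =>
    exfalso
    have h1 := dSqz_inr_inl_ge (b := b) (v := v) (u := u)
    have h2 := abs_tanh_le_tanh_abs u
    simp only at hd
    linarith

lemma partner_A {π π' : PathSp} {C : Set (Rsq × Rsq)} {ε : ℝ}
    (hC : IsCorr (starSet (fgraph π)) (starSet (fgraph π')) C)
    (hCs : ∀ z ∈ C, dSqz z.1 z.2 < ε)
    {w : EReal} {s : ℝ} (hp : (w, s) ∈ fgraph π)
    (hε : ε ≤ 1 - Real.tanh |s|) :
    ∃ v u, (v, u) ∈ fgraph π' ∧ dSqz (Sum.inl (w, s)) (Sum.inl (v, u)) < ε := by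
  obtain ⟨b, hb, hbC⟩ := hC.2.1 (Sum.inl (w, s)) (mem_starSet_inl.2 hp)
  have hd := hCs _ hbC
  match b, hb with
  | Sum.inl p, hb => exact ⟨p.1, p.2, mem_starSet_inl.1 hb, hd⟩
  | Sum.inr b, _ =>
    exfalso
    have h1 := dSqz_inr_inl_ge (b := b) (v := w) (u := s)
    rw [dSqz_comm] at h1
    have h2 := abs_tanh_le_tanh_abs s
    simp only at hd
    linarith

lemma min_mem_uIcc {α : Type*} [LinearOrder α] (a b : α) : min a b ∈ uIcc a b := by
  rcases le_total a b with h | h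
  · rw [min_eq_left h]; exact left_mem_uIcc
  · rw [min_eq_right h]; exact right_mem_uIcc

lemma max_mem_uIcc {α : Type*} [LinearOrder α] (a b : α) : max a b ∈ uIcc a b := by
  rcases le_total a b with h | h
  · rw [max_eq_right h]; exact right_mem_uIcc
  · rw [max_eq_left h]; exact left_mem_uIcc

lemma lt_of_mem_uIcc {α : Type*} [LinearOrder α] {z a b c : α}
    (hz : z ∈ uIcc a b) (ha : c < a) (hb : c < b) : c < z := by
  rcases mem_uIcc.1 hz with ⟨h1, _⟩ | ⟨h1, _⟩
  · exact lt_of_lt_of_le ha h1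
  · exact lt_of_lt_of_le hb h1

lemma mem_uIcc_lt {α : Type*} [LinearOrder α] {z a b c : α}
    (hz : z ∈ uIcc a b) (ha : a < c) (hb : b < c) : z < c := by
  rcases mem_uIcc.1 hz with ⟨_, h2⟩ | ⟨_, h2⟩
  · exact lt_of_le_of_lt h2 hb
  · exact lt_of_le_of_lt h2 ha

lemma min_le_of_mem_uIcc {α : Type*} [LinearOrder α] {z a b : α}
    (hz : z ∈ uIcc a b) : min a b ≤ z := by
  rcases mem_uIcc.1 hz with ⟨h1, _⟩ | ⟨h1, _⟩
  · exact le_trans (min_le_left a b) h1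
  · exact le_trans (min_le_right a b) h1

lemma le_max_of_mem_uIcc {α : Type*} [LinearOrder α] {z a b : α}
    (hz : z ∈ uIcc a b) : z ≤ max a b := by
  rcases mem_uIcc.1 hz with ⟨_, h2⟩ | ⟨_, h2⟩
  · exact le_trans h2 (le_max_right a b)
  · exact le_trans h2 (le_max_left a b)

lemma window_above (π : PathSp) {t : ℝ} (ht : t ∈ interior π.I) {c₂ : ℝ}
    (hl : (c₂ : EReal) < π.l t) (hr : (c₂ : EReal) < π.r t) :
    ∃ δ > 0, ∀ s, s ∈ Ioo (t - δ) (t + δ) →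
      s ∈ π.I ∧ (c₂ : EReal) < π.l s ∧ (c₂ : EReal) < π.r s := by
  have htI : t ∈ π.I := interior_subset ht
  have e1 : ∀ᶠ s in 𝓝 t, s ∈ π.I ∩ Iio t → π.l s ∈ Ioi (c₂ : EReal) :=
    eventually_nhdsWithin_iff.1 ((π.left_cont t htI).eventually_mem (Ioi_mem_nhds hl))
  have e2 : ∀ᶠ s in 𝓝 t, s ∈ π.I ∩ Iio t → π.r s ∈ Ioi (c₂ : EReal) :=
    eventually_nhdsWithin_iff.1 ((π.left_lim t htI).eventually_mem (Ioi_mem_nhds hl))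
  have e3 : ∀ᶠ s in 𝓝 t, s ∈ π.I ∩ Ioi t → π.l s ∈ Ioi (c₂ : EReal) :=
    eventually_nhdsWithin_iff.1 ((π.right_lim t htI).eventually_mem (Ioi_mem_nhds hr))
  have e4 : ∀ᶠ s in 𝓝 t, s ∈ π.I ∩ Ioi t → π.r s ∈ Ioi (c₂ : EReal) :=
    eventually_nhdsWithin_iff.1 ((π.right_cont t htI).eventually_mem (Ioi_mem_nhds hr))
  have e5 : ∀ᶠ s in 𝓝 t, s ∈ π.I := mem_interior_iff_mem_nhds.1 ht
  have hall := (((e1.and e2).and (e3.and e4)).and e5)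
  rw [Metric.eventually_nhds_iff] at hall
  obtain ⟨δ, hδ, H⟩ := hall
  refine ⟨δ, hδ, fun s hs => ?_⟩
  have hdist : dist s t < δ := by
    rw [Real.dist_eq, abs_lt]
    exact ⟨by linarith [hs.1], by linarith [hs.2]⟩
  obtain ⟨⟨⟨H1, H2⟩, H3, H4⟩, H5⟩ := H hdist
  refine ⟨H5, ?_⟩
  rcases lt_trichotomy s t with h | h | h
  · exact ⟨H1 ⟨H5, h⟩, H2 ⟨H5, h⟩⟩
  · subst h; exact ⟨hl, hr⟩
  · exact ⟨H3 ⟨H5, h⟩, H4 ⟨H5, h⟩⟩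

lemma window_below (π : PathSp) {t : ℝ} (ht : t ∈ interior π.I) {c₂ : ℝ}
    (hl : π.l t < (c₂ : EReal)) (hr : π.r t < (c₂ : EReal)) :
    ∃ δ > 0, ∀ s, s ∈ Ioo (t - δ) (t + δ) →
      s ∈ π.I ∧ π.l s < (c₂ : EReal) ∧ π.r s < (c₂ : EReal) := by
  have htI : t ∈ π.I := interior_subset ht
  have e1 : ∀ᶠ s in 𝓝 t, s ∈ π.I ∩ Iio t → π.l s ∈ Iio (c₂ : EReal) :=
    eventually_nhdsWithin_iff.1 ((π.left_cont t htI).eventually_mem (Iio_mem_nhds hl))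
  have e2 : ∀ᶠ s in 𝓝 t, s ∈ π.I ∩ Iio t → π.r s ∈ Iio (c₂ : EReal) :=
    eventually_nhdsWithin_iff.1 ((π.left_lim t htI).eventually_mem (Iio_mem_nhds hl))
  have e3 : ∀ᶠ s in 𝓝 t, s ∈ π.I ∩ Ioi t → π.l s ∈ Iio (c₂ : EReal) :=
    eventually_nhdsWithin_iff.1 ((π.right_lim t htI).eventually_mem (Iio_mem_nhds hr))
  have e4 : ∀ᶠ s in 𝓝 t, s ∈ π.I ∩ Ioi t → π.r s ∈ Iio (c₂ : EReal) :=
    eventually_nhdsWithin_iff.1 ((π.right_cont t htI).eventually_mem (Iio_mem_nhds hr))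
  have e5 : ∀ᶠ s in 𝓝 t, s ∈ π.I := mem_interior_iff_mem_nhds.1 ht
  have hall := (((e1.and e2).and (e3.and e4)).and e5)
  rw [Metric.eventually_nhds_iff] at hall
  obtain ⟨δ, hδ, H⟩ := hall
  refine ⟨δ, hδ, fun s hs => ?_⟩
  have hdist : dist s t < δ := by
    rw [Real.dist_eq, abs_lt]
    exact ⟨by linarith [hs.1], by linarith [hs.2]⟩
  obtain ⟨⟨⟨H1, H2⟩, H3, H4⟩, H5⟩ := H hdist
  refine ⟨H5, ?_⟩
  rcases lt_trichotomy s t with h | h | h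
  · exact ⟨H1 ⟨H5, h⟩, H2 ⟨H5, h⟩⟩
  · subst h; exact ⟨hl, hr⟩
  · exact ⟨H3 ⟨H5, h⟩, H4 ⟨H5, h⟩⟩

lemma right_approach (π' : PathSp) (hbi : IsBiInf π') {tn : ℝ} {c : EReal}
    (hr : π'.r tn < c) :
    ∀ᶠ s in 𝓝[Ioi tn] tn, π'.l s < c ∧ π'.r s < c := by
  have hI : π'.I = univ := hbi
  have h1 := π'.right_cont tn (by rw [hI]; exact mem_univ _)
  have h2 := π'.right_lim tn (by rw [hI]; exact mem_univ _)
  rw [hI, univ_inter] at h1 h2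
  exact (h2.eventually_mem (Iio_mem_nhds hr)).and (h1.eventually_mem (Iio_mem_nhds hr))

lemma left_approach (π' : PathSp) (hbi : IsBiInf π') {tn : ℝ} {c : EReal}
    (hl : π'.l tn < c) :
    ∀ᶠ s in 𝓝[Iio tn] tn, π'.l s < c ∧ π'.r s < c := by
  have hI : π'.I = univ := hbi
  have h1 := π'.left_cont tn (by rw [hI]; exact mem_univ _)
  have h2 := π'.left_lim tn (by rw [hI]; exact mem_univ _)
  rw [hI, univ_inter] at h1 h2
  exact (h1.eventually_mem (Iio_mem_nhds hl)).and (h2.eventually_mem (Iio_mem_nhds hl))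

lemma right_approach_gt (π' : PathSp) (hbi : IsBiInf π') {tn : ℝ} {c : EReal}
    (hr : c < π'.r tn) :
    ∀ᶠ s in 𝓝[Ioi tn] tn, c < π'.l s ∧ c < π'.r s := by
  have hI : π'.I = univ := hbi
  have h1 := π'.right_cont tn (by rw [hI]; exact mem_univ _)
  have h2 := π'.right_lim tn (by rw [hI]; exact mem_univ _)
  rw [hI, univ_inter] at h1 h2
  exact (h2.eventually_mem (Ioi_mem_nhds hr)).and (h1.eventually_mem (Ioi_mem_nhds hr))

lemma left_approach_gt (π' : PathSp) (hbi : IsBiInf π') {tn : ℝ} {c : EReal}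
    (hl : c < π'.l tn) :
    ∀ᶠ s in 𝓝[Iio tn] tn, c < π'.l s ∧ c < π'.r s := by
  have hI : π'.I = univ := hbi
  have h1 := π'.left_cont tn (by rw [hI]; exact mem_univ _)
  have h2 := π'.left_lim tn (by rw [hI]; exact mem_univ _)
  rw [hI, univ_inter] at h1 h2
  exact (h1.eventually_mem (Ioi_mem_nhds hl)).and (h2.eventually_mem (Ioi_mem_nhds hl))

lemma part_one {π₁n π₂n : ℕ → PathSp} {π₁ π₂ : PathSp}
    (h1n : ∀ n, IsConn (π₁n n))
    (hord : ∀ n, OrdBelow (π₁n n) (π₂n n))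
    (hc1 : M1Conv π₁n π₁) (hc2 : M1Conv π₂n π₂) :
    Lo π₁ ∩ Rbar π₂ = ∅ := by
  rw [Set.eq_empty_iff_forall_notMem]
  rintro ⟨x, t⟩ ⟨⟨hti, hxm⟩, ht2, hvx⟩
  obtain ⟨c, hxc, hcm⟩ := EReal.exists_between_coe_real hxm
  obtain ⟨c₂, hcc₂, hc₂m⟩ := EReal.exists_between_coe_real hcm
  have hcc2 : c < c₂ := by exact_mod_cast hcc₂
  have hl1 : (c₂ : EReal) < π₁.l t := lt_of_lt_of_le hc₂m (min_le_left _ _)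
  have hr1 : (c₂ : EReal) < π₁.r t := lt_of_lt_of_le hc₂m (min_le_right _ _)
  obtain ⟨δ₀, hδ₀, hwin⟩ := window_above π₁ hti hl1 hr1
  obtain ⟨γ, hγdef⟩ : ∃ g : ℝ, g = (Real.tanh c₂ - Real.tanh c) / 2 := ⟨_, rfl⟩
  have hγ : 0 < γ := by
    have := tanh_strictMono hcc2
    rw [hγdef]; linarith
  have hex : etanh x < Real.tanh c := etanh_lt_tanh_of_lt hxc
  obtain ⟨γ', hγ'def⟩ : ∃ g : ℝ, g = (Real.tanh c - etanh x) / 2 := ⟨_, rfl⟩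
  have hγ' : 0 < γ' := by rw [hγ'def]; linarith
  obtain ⟨δ, hδdef⟩ : ∃ d : ℝ, d = min δ₀ (min 1 (min γ γ' / 2)) := ⟨_, rfl⟩
  have hδpos : 0 < δ := by
    rw [hδdef]
    exact lt_min hδ₀ (lt_min one_pos (by positivity))
  have hδδ₀ : δ ≤ δ₀ := by rw [hδdef]; exact min_le_left _ _
  have hδ1 : δ ≤ 1 := by
    rw [hδdef]; exact le_trans (min_le_right _ _) (min_le_left _ _)
  have hδγ : δ ≤ min γ γ' / 2 := by
    rw [hδdef]; exact le_trans (min_le_right _ _) (min_le_right _ _)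
  have hmγ : min γ γ' ≤ γ := min_le_left _ _
  have hmγ' : min γ γ' ≤ γ' := min_le_right _ _
  have h2t : (0:ℝ) < 2 + |t| := by positivity
  obtain ⟨ε, hεpos, hεe1, hεe6, hεe2a, hεe2b, hεe3a, hεe3b, hεe4a, hεe4b, hεe5a, hεe5b⟩ :
      ∃ ε : ℝ, 0 < ε ∧ ε ≤ (1 - Real.tanh (|t|+1))/2 ∧ ε ≤ min γ γ' / (2*(2+|t|)) ∧
        ε ≤ Real.tanh (t+δ/8) - Real.tanh t ∧ ε ≤ Real.tanh t - Real.tanh (t-δ/8) ∧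
        ε ≤ Real.tanh (t-3*δ/8) - Real.tanh (t-δ/2) ∧
        ε ≤ Real.tanh (t-δ/2) - Real.tanh (t-5*δ/8) ∧
        ε ≤ Real.tanh (t+5*δ/8) - Real.tanh (t+δ/2) ∧
        ε ≤ Real.tanh (t+δ/2) - Real.tanh (t+3*δ/8) ∧
        ε ≤ Real.tanh (t+7*δ/8) - Real.tanh (t+5*δ/8) ∧
        ε ≤ Real.tanh (t-5*δ/8) - Real.tanh (t-7*δ/8) := by
    refine ⟨min ((1 - Real.tanh (|t|+1))/2) (min (min γ γ' / (2*(2+|t|)))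
      (min (Real.tanh (t+δ/8) - Real.tanh t) (min (Real.tanh t - Real.tanh (t-δ/8))
      (min (Real.tanh (t-3*δ/8) - Real.tanh (t-δ/2))
      (min (Real.tanh (t-δ/2) - Real.tanh (t-5*δ/8))
      (min (Real.tanh (t+5*δ/8) - Real.tanh (t+δ/2))
      (min (Real.tanh (t+δ/2) - Real.tanh (t+3*δ/8))
      (min (Real.tanh (t+7*δ/8) - Real.tanh (t+5*δ/8))
      (Real.tanh (t-5*δ/8) - Real.tanh (t-7*δ/8)))))))))), ?_, ?_, ?_, ?_, ?_, ?_, ?_,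
      ?_, ?_, ?_, ?_⟩
    · refine lt_min ?_ (lt_min ?_ (lt_min ?_ (lt_min ?_ (lt_min ?_ (lt_min ?_
        (lt_min ?_ (lt_min ?_ (lt_min ?_ ?_))))))))
      · have := tanh_lt_one (|t|+1); linarith
      · exact div_pos (lt_min hγ hγ') (by positivity)
      all_goals exact sub_pos.2 (tanh_strictMono (by linarith))
    · exact min_le_left _ _
    · exact le_trans (min_le_right _ _) (min_le_left _ _)
    · exact le_trans (min_le_right _ _) (le_trans (min_le_right _ _) (min_le_left _ _))
    · exact le_trans (min_le_right _ _) (le_trans (min_le_right _ _)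
        (le_trans (min_le_right _ _) (min_le_left _ _)))
    · exact le_trans (min_le_right _ _) (le_trans (min_le_right _ _)
        (le_trans (min_le_right _ _) (le_trans (min_le_right _ _) (min_le_left _ _))))
    · exact le_trans (min_le_right _ _) (le_trans (min_le_right _ _)
        (le_trans (min_le_right _ _) (le_trans (min_le_right _ _)
        (le_trans (min_le_right _ _) (min_le_left _ _)))))
    · exact le_trans (min_le_right _ _) (le_trans (min_le_right _ _)
        (le_trans (min_le_right _ _) (le_trans (min_le_right _ _)
        (le_trans (min_le_right _ _) (le_trans (min_le_right _ _) (min_le_left _ _))))))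
    · exact le_trans (min_le_right _ _) (le_trans (min_le_right _ _)
        (le_trans (min_le_right _ _) (le_trans (min_le_right _ _)
        (le_trans (min_le_right _ _) (le_trans (min_le_right _ _)
        (le_trans (min_le_right _ _) (min_le_left _ _)))))))
    · exact le_trans (min_le_right _ _) (le_trans (min_le_right _ _)
        (le_trans (min_le_right _ _) (le_trans (min_le_right _ _)
        (le_trans (min_le_right _ _) (le_trans (min_le_right _ _)
        (le_trans (min_le_right _ _) (le_trans (min_le_right _ _) (min_le_left _ _))))))))
    · exact le_trans (min_le_right _ _) (le_trans (min_le_right _ _)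
        (le_trans (min_le_right _ _) (le_trans (min_le_right _ _)
        (le_trans (min_le_right _ _) (le_trans (min_le_right _ _)
        (le_trans (min_le_right _ _) (le_trans (min_le_right _ _)
        (min_le_right _ _))))))))
  have hbnd : ∀ u : ℝ, |u| ≤ |t| + 1 → ε ≤ 1 - Real.tanh |u| := by
    intro u hu
    have h1 : Real.tanh |u| ≤ Real.tanh (|t|+1) := tanh_strictMono.monotone hu
    have h2 := tanh_lt_one (|t|+1)
    linarith
  have hkey6 : (2 + |t|) * ε ≤ min γ γ' / 2 := by
    calc (2+|t|)*ε ≤ (2+|t|) * (min γ γ' / (2*(2+|t|))) :=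
          mul_le_mul_of_nonneg_left hεe6 h2t.le
      _ = min γ γ' / 2 := by field_simp
  obtain ⟨n, ⟨C₁, hC₁, hC₁s⟩, C₂, hC₂, hC₂s⟩ :=
    ((eventually_good_corr hc1 hεpos).and (eventually_good_corr hc2 hεpos)).exists
  -- transfer of the π₂-point (min value at time t)
  have hq2 : ((min (π₂.l t) (π₂.r t)), t) ∈ fgraph π₂ := ⟨ht2, min_mem_uIcc _ _⟩
  obtain ⟨xn, tn, hxnF, hdq⟩ := partner_B hC₂ hC₂s hq2 (hbnd t (by linarith))
  obtain ⟨hdq_t, hdq_v⟩ := dSqz_inl_est hdq.le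
  rw [abs_sub_le_iff] at hdq_t
  have htn_ub : tn ≤ t + δ/8 := le_of_tanh_le (by linarith [hdq_t.1])
  have htn_lb : t - δ/8 ≤ tn := le_of_tanh_le (by linarith [hdq_t.2])
  have htn_abs : |tn| ≤ |t| + 1 := by
    rw [abs_le]
    constructor
    · have := neg_abs_le t; linarith
    · have := le_abs_self t; linarith
  have hxnc : xn < (c : EReal) := by
    apply lt_coe_of_etanh_lt
    have habs := abs_le.1 hdq_v
    have hvx' : etanh (min (π₂.l t) (π₂.r t)) ≤ etanh x := etanh_mono hvx
    have h1 : (1+|tn|)*ε ≤ (2+|t|)*ε :=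
      mul_le_mul_of_nonneg_right (by linarith) hεpos.le
    have h2 : |tn - t| ≤ δ/8 := abs_le.2 ⟨by linarith, by linarith⟩
    have h3 : min γ γ' / 2 ≤ γ' / 2 := by linarith
    linarith [habs.1, hkey6]
  -- transfer of the two π₁ anchor points at t ± δ/2
  have hmemm : t - δ/2 ∈ Ioo (t - δ₀) (t + δ₀) := ⟨by linarith, by linarith⟩
  obtain ⟨hIm, hlm, hrm⟩ := hwin _ hmemm
  have hpm : (π₁.l (t - δ/2), t - δ/2) ∈ fgraph π₁ := ⟨hIm, left_mem_uIcc⟩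
  have habsm : |t - δ/2| ≤ |t| + 1 := by
    rw [abs_le]
    exact ⟨by linarith [neg_abs_le t], by linarith [le_abs_self t]⟩
  obtain ⟨wm, um, hwmF, hdm⟩ := partner_B hC₁ hC₁s hpm (hbnd _ habsm)
  obtain ⟨hdmt, _⟩ := dSqz_inl_est hdm.le
  rw [abs_sub_le_iff] at hdmt
  have humub : um ≤ t - 3*δ/8 := le_of_tanh_le (by linarith [hdmt.1])
  have humlb : t - 5*δ/8 ≤ um := le_of_tanh_le (by linarith [hdmt.2])
  have hmemp : t + δ/2 ∈ Ioo (t - δ₀) (t + δ₀) := ⟨by linarith, by linarith⟩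
  obtain ⟨hIp, hlp, hrp⟩ := hwin _ hmemp
  have hpp : (π₁.l (t + δ/2), t + δ/2) ∈ fgraph π₁ := ⟨hIp, left_mem_uIcc⟩
  have habsp : |t + δ/2| ≤ |t| + 1 := by
    rw [abs_le]
    exact ⟨by linarith [neg_abs_le t], by linarith [le_abs_self t]⟩
  obtain ⟨wp, up, hwpF, hdp⟩ := partner_B hC₁ hC₁s hpp (hbnd _ habsp)
  obtain ⟨hdpt, _⟩ := dSqz_inl_est hdp.le
  rw [abs_sub_le_iff] at hdpt
  have hupub : up ≤ t + 5*δ/8 := le_of_tanh_le (by linarith [hdpt.1])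
  have huplb : t + 3*δ/8 ≤ up := le_of_tanh_le (by linarith [hdpt.2])
  have hconn : ((π₁n n).I).OrdConnected := h1n n
  have hIcc : Icc um up ⊆ (π₁n n).I := hconn.out hwmF.1 hwpF.1
  -- window transfer: every point of π₁n with time near t has value above c
  have hwindow : ∀ w s, (w, s) ∈ fgraph (π₁n n) → t - 5*δ/8 ≤ s → s ≤ t + 5*δ/8 →
      (c : EReal) < w := by
    intro w s hwF hs1 hs2
    have hs_abs : |s| ≤ |t| + 1 := by
      rw [abs_le]
      exact ⟨by linarith [neg_abs_le t], by linarith [le_abs_self t]⟩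
    obtain ⟨v', u', hv'F, hd'⟩ := partner_A hC₁ hC₁s hwF (hbnd s hs_abs)
    obtain ⟨hd't, hd'v⟩ := dSqz_inl_est hd'.le
    rw [abs_sub_le_iff] at hd't
    have hts1 : Real.tanh s ≤ Real.tanh (t+5*δ/8) := tanh_strictMono.monotone hs2
    have hts2 : Real.tanh (t-5*δ/8) ≤ Real.tanh s := tanh_strictMono.monotone hs1
    have hu'1 : u' ≤ t + 7*δ/8 := le_of_tanh_le (by linarith [hd't.2])
    have hu'2 : t - 7*δ/8 ≤ u' := le_of_tanh_le (by linarith [hd't.1])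
    obtain ⟨_, hl', hr'⟩ := hwin u' ⟨by linarith, by linarith⟩
    have hv'c₂ : (c₂ : EReal) < v' := lt_of_mem_uIcc hv'F.2 hl' hr'
    have hv'low : Real.tanh c₂ ≤ etanh v' := (tanh_lt_etanh_of_lt hv'c₂).le
    apply coe_lt_of_tanh_lt_etanh
    have habs := abs_le.1 hd'v
    have h1 : (1+|s|)*ε ≤ (2+|t|)*ε :=
      mul_le_mul_of_nonneg_right (by linarith) hεpos.le
    have h2 : |s - u'| ≤ 7*δ/4 := abs_le.2 ⟨by linarith, by linarith⟩
    have h3 : min γ γ' / 2 ≤ γ / 2 := by linarith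
    linarith [habs.2, hkey6]
  have htnI : tn ∈ (π₁n n).I := hIcc ⟨by linarith, by linarith⟩
  obtain ⟨π₁', π₂', hbi1, hbi2, hext1, hext2, hle⟩ := hord n
  have hxn' : xn ∈ uIcc (π₂'.l tn) (π₂'.r tn) := (hext2 hxnF).2
  have hminlt : min (π₁'.l tn) (π₁'.r tn) < (c : EReal) :=
    lt_of_le_of_lt (le_trans (min_le_min (hle tn).1 (hle tn).2)
      (min_le_of_mem_uIcc hxn')) hxnc
  rcases min_lt_iff.1 hminlt with hcase | hcase
  · -- π₁'.l tn < c : approach from the left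
    have hev1 := left_approach π₁' hbi1 hcase
    have hev2 : ∀ᶠ s in 𝓝[Iio tn] tn, um < s :=
      Filter.Eventually.filter_mono nhdsWithin_le_nhds (Ioi_mem_nhds (by linarith))
    have hev3 : ∀ᶠ s in 𝓝[Iio tn] tn, s ∈ Iio tn := eventually_mem_nhdsWithin
    obtain ⟨s, ⟨hls, hrs⟩, hsu, hst⟩ := (hev1.and (hev2.and hev3)).exists
    have hstn : s < tn := hst
    have hsI : s ∈ (π₁n n).I := hIcc ⟨hsu.le, by linarith⟩
    have hclt : (c:EReal) < (π₁n n).l s :=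
      hwindow _ s ⟨hsI, left_mem_uIcc⟩ (by linarith) (by linarith)
    have hmem1' : (π₁n n).l s ∈ uIcc (π₁'.l s) (π₁'.r s) := (hext1 (show ((π₁n n).l s, s) ∈ fgraph (π₁n n) from ⟨hsI, left_mem_uIcc⟩)).2
    exact absurd hclt (not_lt.2 (mem_uIcc_lt hmem1' hls hrs).le)
  · -- π₁'.r tn < c : approach from the right
    have hev1 := right_approach π₁' hbi1 hcase
    have hev2 : ∀ᶠ s in 𝓝[Ioi tn] tn, s < up :=
      Filter.Eventually.filter_mono nhdsWithin_le_nhds (Iio_mem_nhds (by linarith))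
    have hev3 : ∀ᶠ s in 𝓝[Ioi tn] tn, s ∈ Ioi tn := eventually_mem_nhdsWithin
    obtain ⟨s, ⟨hls, hrs⟩, hsu, hst⟩ := (hev1.and (hev2.and hev3)).exists
    have hstn : tn < s := hst
    have hsI : s ∈ (π₁n n).I := hIcc ⟨by linarith, hsu.le⟩
    have hclt : (c:EReal) < (π₁n n).l s :=
      hwindow _ s ⟨hsI, left_mem_uIcc⟩ (by linarith) (by linarith)
    have hmem1' : (π₁n n).l s ∈ uIcc (π₁'.l s) (π₁'.r s) := (hext1 (show ((π₁n n).l s, s) ∈ fgraph (π₁n n) from ⟨hsI, left_mem_uIcc⟩)).2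
    exact absurd hclt (not_lt.2 (mem_uIcc_lt hmem1' hls hrs).le)

lemma part_two {π₁n π₂n : ℕ → PathSp} {π₁ π₂ : PathSp}
    (h2n : ∀ n, IsConn (π₂n n))
    (hord : ∀ n, OrdBelow (π₁n n) (π₂n n))
    (hc1 : M1Conv π₁n π₁) (hc2 : M1Conv π₂n π₂) :
    Lbar π₁ ∩ Ro π₂ = ∅ := by
  rw [Set.eq_empty_iff_forall_notMem]
  rintro ⟨x, t⟩ ⟨⟨ht1, hxM⟩, hti, hMx⟩
  obtain ⟨c, hMc, hcx⟩ := EReal.exists_between_coe_real hMx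
  obtain ⟨c₂, hMc₂, hc₂c⟩ := EReal.exists_between_coe_real hMc
  have hcc2 : c₂ < c := by exact_mod_cast hc₂c
  have hl2 : π₂.l t < (c₂ : EReal) := lt_of_le_of_lt (le_max_left _ _) hMc₂
  have hr2 : π₂.r t < (c₂ : EReal) := lt_of_le_of_lt (le_max_right _ _) hMc₂
  obtain ⟨δ₀, hδ₀, hwin⟩ := window_below π₂ hti hl2 hr2
  obtain ⟨γ, hγdef⟩ : ∃ g : ℝ, g = (Real.tanh c - Real.tanh c₂) / 2 := ⟨_, rfl⟩
  have hγ : 0 < γ := by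
    have := tanh_strictMono hcc2
    rw [hγdef]; linarith
  have hex : Real.tanh c < etanh x := tanh_lt_etanh_of_lt hcx
  obtain ⟨γ', hγ'def⟩ : ∃ g : ℝ, g = (etanh x - Real.tanh c) / 2 := ⟨_, rfl⟩
  have hγ' : 0 < γ' := by rw [hγ'def]; linarith
  obtain ⟨δ, hδdef⟩ : ∃ d : ℝ, d = min δ₀ (min 1 (min γ γ' / 2)) := ⟨_, rfl⟩
  have hδpos : 0 < δ := by
    rw [hδdef]
    exact lt_min hδ₀ (lt_min one_pos (by positivity))
  have hδδ₀ : δ ≤ δ₀ := by rw [hδdef]; exact min_le_left _ _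
  have hδ1 : δ ≤ 1 := by
    rw [hδdef]; exact le_trans (min_le_right _ _) (min_le_left _ _)
  have hδγ : δ ≤ min γ γ' / 2 := by
    rw [hδdef]; exact le_trans (min_le_right _ _) (min_le_right _ _)
  have hmγ : min γ γ' ≤ γ := min_le_left _ _
  have hmγ' : min γ γ' ≤ γ' := min_le_right _ _
  have h2t : (0:ℝ) < 2 + |t| := by positivity
  obtain ⟨ε, hεpos, hεe1, hεe6, hεe2a, hεe2b, hεe3a, hεe3b, hεe4a, hεe4b, hεe5a, hεe5b⟩ :
      ∃ ε : ℝ, 0 < ε ∧ ε ≤ (1 - Real.tanh (|t|+1))/2 ∧ ε ≤ min γ γ' / (2*(2+|t|)) ∧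
        ε ≤ Real.tanh (t+δ/8) - Real.tanh t ∧ ε ≤ Real.tanh t - Real.tanh (t-δ/8) ∧
        ε ≤ Real.tanh (t-3*δ/8) - Real.tanh (t-δ/2) ∧
        ε ≤ Real.tanh (t-δ/2) - Real.tanh (t-5*δ/8) ∧
        ε ≤ Real.tanh (t+5*δ/8) - Real.tanh (t+δ/2) ∧
        ε ≤ Real.tanh (t+δ/2) - Real.tanh (t+3*δ/8) ∧
        ε ≤ Real.tanh (t+7*δ/8) - Real.tanh (t+5*δ/8) ∧
        ε ≤ Real.tanh (t-5*δ/8) - Real.tanh (t-7*δ/8) := by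
    refine ⟨min ((1 - Real.tanh (|t|+1))/2) (min (min γ γ' / (2*(2+|t|)))
      (min (Real.tanh (t+δ/8) - Real.tanh t) (min (Real.tanh t - Real.tanh (t-δ/8))
      (min (Real.tanh (t-3*δ/8) - Real.tanh (t-δ/2))
      (min (Real.tanh (t-δ/2) - Real.tanh (t-5*δ/8))
      (min (Real.tanh (t+5*δ/8) - Real.tanh (t+δ/2))
      (min (Real.tanh (t+δ/2) - Real.tanh (t+3*δ/8))
      (min (Real.tanh (t+7*δ/8) - Real.tanh (t+5*δ/8))
      (Real.tanh (t-5*δ/8) - Real.tanh (t-7*δ/8)))))))))), ?_, ?_, ?_, ?_, ?_, ?_, ?_,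
      ?_, ?_, ?_, ?_⟩
    · refine lt_min ?_ (lt_min ?_ (lt_min ?_ (lt_min ?_ (lt_min ?_ (lt_min ?_
        (lt_min ?_ (lt_min ?_ (lt_min ?_ ?_))))))))
      · have := tanh_lt_one (|t|+1); linarith
      · exact div_pos (lt_min hγ hγ') (by positivity)
      all_goals exact sub_pos.2 (tanh_strictMono (by linarith))
    · exact min_le_left _ _
    · exact le_trans (min_le_right _ _) (min_le_left _ _)
    · exact le_trans (min_le_right _ _) (le_trans (min_le_right _ _) (min_le_left _ _))
    · exact le_trans (min_le_right _ _) (le_trans (min_le_right _ _)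
        (le_trans (min_le_right _ _) (min_le_left _ _)))
    · exact le_trans (min_le_right _ _) (le_trans (min_le_right _ _)
        (le_trans (min_le_right _ _) (le_trans (min_le_right _ _) (min_le_left _ _))))
    · exact le_trans (min_le_right _ _) (le_trans (min_le_right _ _)
        (le_trans (min_le_right _ _) (le_trans (min_le_right _ _)
        (le_trans (min_le_right _ _) (min_le_left _ _)))))
    · exact le_trans (min_le_right _ _) (le_trans (min_le_right _ _)
        (le_trans (min_le_right _ _) (le_trans (min_le_right _ _)
        (le_trans (min_le_right _ _) (le_trans (min_le_right _ _) (min_le_left _ _))))))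
    · exact le_trans (min_le_right _ _) (le_trans (min_le_right _ _)
        (le_trans (min_le_right _ _) (le_trans (min_le_right _ _)
        (le_trans (min_le_right _ _) (le_trans (min_le_right _ _)
        (le_trans (min_le_right _ _) (min_le_left _ _)))))))
    · exact le_trans (min_le_right _ _) (le_trans (min_le_right _ _)
        (le_trans (min_le_right _ _) (le_trans (min_le_right _ _)
        (le_trans (min_le_right _ _) (le_trans (min_le_right _ _)
        (le_trans (min_le_right _ _) (le_trans (min_le_right _ _) (min_le_left _ _))))))))
    · exact le_trans (min_le_right _ _) (le_trans (min_le_right _ _)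
        (le_trans (min_le_right _ _) (le_trans (min_le_right _ _)
        (le_trans (min_le_right _ _) (le_trans (min_le_right _ _)
        (le_trans (min_le_right _ _) (le_trans (min_le_right _ _)
        (min_le_right _ _))))))))
  have hbnd : ∀ u : ℝ, |u| ≤ |t| + 1 → ε ≤ 1 - Real.tanh |u| := by
    intro u hu
    have h1 : Real.tanh |u| ≤ Real.tanh (|t|+1) := tanh_strictMono.monotone hu
    have h2 := tanh_lt_one (|t|+1)
    linarith
  have hkey6 : (2 + |t|) * ε ≤ min γ γ' / 2 := by
    calc (2+|t|)*ε ≤ (2+|t|) * (min γ γ' / (2*(2+|t|))) :=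
          mul_le_mul_of_nonneg_left hεe6 h2t.le
      _ = min γ γ' / 2 := by field_simp
  obtain ⟨n, ⟨C₁, hC₁, hC₁s⟩, C₂, hC₂, hC₂s⟩ :=
    ((eventually_good_corr hc1 hεpos).and (eventually_good_corr hc2 hεpos)).exists
  -- transfer of the π₁-point (max value at time t)
  have hq1 : ((max (π₁.l t) (π₁.r t)), t) ∈ fgraph π₁ := ⟨ht1, max_mem_uIcc _ _⟩
  obtain ⟨xn, tn, hxnF, hdq⟩ := partner_B hC₁ hC₁s hq1 (hbnd t (by linarith))
  obtain ⟨hdq_t, hdq_v⟩ := dSqz_inl_est hdq.le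
  rw [abs_sub_le_iff] at hdq_t
  have htn_ub : tn ≤ t + δ/8 := le_of_tanh_le (by linarith [hdq_t.1])
  have htn_lb : t - δ/8 ≤ tn := le_of_tanh_le (by linarith [hdq_t.2])
  have htn_abs : |tn| ≤ |t| + 1 := by
    rw [abs_le]
    constructor
    · have := neg_abs_le t; linarith
    · have := le_abs_self t; linarith
  have hxnc : (c : EReal) < xn := by
    apply coe_lt_of_tanh_lt_etanh
    have habs := abs_le.1 hdq_v
    have hvx' : etanh x ≤ etanh (max (π₁.l t) (π₁.r t)) := etanh_mono hxM
    have h1 : (1+|tn|)*ε ≤ (2+|t|)*ε :=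
      mul_le_mul_of_nonneg_right (by linarith) hεpos.le
    have h2 : |tn - t| ≤ δ/8 := abs_le.2 ⟨by linarith, by linarith⟩
    have h3 : min γ γ' / 2 ≤ γ' / 2 := by linarith
    linarith [habs.1, hkey6]
  -- transfer of the two π₂ anchor points at t ± δ/2
  have hmemm : t - δ/2 ∈ Ioo (t - δ₀) (t + δ₀) := ⟨by linarith, by linarith⟩
  obtain ⟨hIm, hlm, hrm⟩ := hwin _ hmemm
  have hpm : (π₂.l (t - δ/2), t - δ/2) ∈ fgraph π₂ := ⟨hIm, left_mem_uIcc⟩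
  have habsm : |t - δ/2| ≤ |t| + 1 := by
    rw [abs_le]
    exact ⟨by linarith [neg_abs_le t], by linarith [le_abs_self t]⟩
  obtain ⟨wm, um, hwmF, hdm⟩ := partner_B hC₂ hC₂s hpm (hbnd _ habsm)
  obtain ⟨hdmt, _⟩ := dSqz_inl_est hdm.le
  rw [abs_sub_le_iff] at hdmt
  have humub : um ≤ t - 3*δ/8 := le_of_tanh_le (by linarith [hdmt.1])
  have humlb : t - 5*δ/8 ≤ um := le_of_tanh_le (by linarith [hdmt.2])
  have hmemp : t + δ/2 ∈ Ioo (t - δ₀) (t + δ₀) := ⟨by linarith, by linarith⟩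
  obtain ⟨hIp, hlp, hrp⟩ := hwin _ hmemp
  have hpp : (π₂.l (t + δ/2), t + δ/2) ∈ fgraph π₂ := ⟨hIp, left_mem_uIcc⟩
  have habsp : |t + δ/2| ≤ |t| + 1 := by
    rw [abs_le]
    exact ⟨by linarith [neg_abs_le t], by linarith [le_abs_self t]⟩
  obtain ⟨wp, up, hwpF, hdp⟩ := partner_B hC₂ hC₂s hpp (hbnd _ habsp)
  obtain ⟨hdpt, _⟩ := dSqz_inl_est hdp.le
  rw [abs_sub_le_iff] at hdpt
  have hupub : up ≤ t + 5*δ/8 := le_of_tanh_le (by linarith [hdpt.1])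
  have huplb : t + 3*δ/8 ≤ up := le_of_tanh_le (by linarith [hdpt.2])
  have hconn : ((π₂n n).I).OrdConnected := h2n n
  have hIcc : Icc um up ⊆ (π₂n n).I := hconn.out hwmF.1 hwpF.1
  -- window transfer: every point of π₂n with time near t has value below c
  have hwindow : ∀ w s, (w, s) ∈ fgraph (π₂n n) → t - 5*δ/8 ≤ s → s ≤ t + 5*δ/8 →
      w < (c : EReal) := by
    intro w s hwF hs1 hs2
    have hs_abs : |s| ≤ |t| + 1 := by
      rw [abs_le]
      exact ⟨by linarith [neg_abs_le t], by linarith [le_abs_self t]⟩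
    obtain ⟨v', u', hv'F, hd'⟩ := partner_A hC₂ hC₂s hwF (hbnd s hs_abs)
    obtain ⟨hd't, hd'v⟩ := dSqz_inl_est hd'.le
    rw [abs_sub_le_iff] at hd't
    have hts1 : Real.tanh s ≤ Real.tanh (t+5*δ/8) := tanh_strictMono.monotone hs2
    have hts2 : Real.tanh (t-5*δ/8) ≤ Real.tanh s := tanh_strictMono.monotone hs1
    have hu'1 : u' ≤ t + 7*δ/8 := le_of_tanh_le (by linarith [hd't.2])
    have hu'2 : t - 7*δ/8 ≤ u' := le_of_tanh_le (by linarith [hd't.1])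
    obtain ⟨_, hl', hr'⟩ := hwin u' ⟨by linarith, by linarith⟩
    have hv'c₂ : v' < (c₂ : EReal) := mem_uIcc_lt hv'F.2 hl' hr'
    have hv'hi : etanh v' ≤ Real.tanh c₂ := (etanh_lt_tanh_of_lt hv'c₂).le
    apply lt_coe_of_etanh_lt
    have habs := abs_le.1 hd'v
    have h1 : (1+|s|)*ε ≤ (2+|t|)*ε :=
      mul_le_mul_of_nonneg_right (by linarith) hεpos.le
    have h2 : |s - u'| ≤ 7*δ/4 := abs_le.2 ⟨by linarith, by linarith⟩
    have h3 : min γ γ' / 2 ≤ γ / 2 := by linarith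
    linarith [habs.2, hkey6]
  have htnI : tn ∈ (π₂n n).I := hIcc ⟨by linarith, by linarith⟩
  obtain ⟨π₁', π₂', hbi1, hbi2, hext1, hext2, hle⟩ := hord n
  have hxn' : xn ∈ uIcc (π₁'.l tn) (π₁'.r tn) := (hext1 hxnF).2
  have hmaxgt : (c : EReal) < max (π₂'.l tn) (π₂'.r tn) :=
    lt_of_lt_of_le (lt_of_lt_of_le hxnc (le_max_of_mem_uIcc hxn'))
      (max_le_max (hle tn).1 (hle tn).2)
  rcases lt_max_iff.1 hmaxgt with hcase | hcase
  · -- c < π₂'.l tn : approach from the left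
    have hev1 := left_approach_gt π₂' hbi2 hcase
    have hev2 : ∀ᶠ s in 𝓝[Iio tn] tn, um < s :=
      Filter.Eventually.filter_mono nhdsWithin_le_nhds (Ioi_mem_nhds (by linarith))
    have hev3 : ∀ᶠ s in 𝓝[Iio tn] tn, s ∈ Iio tn := eventually_mem_nhdsWithin
    obtain ⟨s, ⟨hls, hrs⟩, hsu, hst⟩ := (hev1.and (hev2.and hev3)).exists
    have hstn : s < tn := hst
    have hsI : s ∈ (π₂n n).I := hIcc ⟨hsu.le, by linarith⟩
    have hclt : (π₂n n).l s < (c:EReal) :=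
      hwindow _ s ⟨hsI, left_mem_uIcc⟩ (by linarith) (by linarith)
    have hmem2' : (π₂n n).l s ∈ uIcc (π₂'.l s) (π₂'.r s) :=
      (hext2 (show ((π₂n n).l s, s) ∈ fgraph (π₂n n) from ⟨hsI, left_mem_uIcc⟩)).2
    exact absurd hclt (not_lt.2 (lt_of_mem_uIcc hmem2' hls hrs).le)
  · -- c < π₂'.r tn : approach from the right
    have hev1 := right_approach_gt π₂' hbi2 hcase
    have hev2 : ∀ᶠ s in 𝓝[Ioi tn] tn, s < up :=
      Filter.Eventually.filter_mono nhdsWithin_le_nhds (Iio_mem_nhds (by linarith))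
    have hev3 : ∀ᶠ s in 𝓝[Ioi tn] tn, s ∈ Ioi tn := eventually_mem_nhdsWithin
    obtain ⟨s, ⟨hls, hrs⟩, hsu, hst⟩ := (hev1.and (hev2.and hev3)).exists
    have hstn : tn < s := hst
    have hsI : s ∈ (π₂n n).I := hIcc ⟨by linarith, hsu.le⟩
    have hclt : (π₂n n).l s < (c:EReal) :=
      hwindow _ s ⟨hsI, left_mem_uIcc⟩ (by linarith) (by linarith)
    have hmem2' : (π₂n n).l s ∈ uIcc (π₂'.l s) (π₂'.r s) :=
      (hext2 (show ((π₂n n).l s, s) ∈ fgraph (π₂n n) from ⟨hsI, left_mem_uIcc⟩)).2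
    exact absurd hclt (not_lt.2 (lt_of_mem_uIcc hmem2' hls hrs).le)


/-- **Lemma (Limits of ordered paths).**
If `π₁ⁿ ◁ π₂ⁿ` for all `n` and `πᵢⁿ → πᵢ` in the M1 topology with `πᵢ ∈ Π^|`, then
`L°(π₁) ∩ R̄(π₂) = ∅` and `L̄(π₁) ∩ R°(π₂) = ∅`. -/
theorem limits_of_ordered_paths
    (π₁n π₂n : ℕ → PathSp) (π₁ π₂ : PathSp)
    (h1n : ∀ n, IsConn (π₁n n)) (h2n : ∀ n, IsConn (π₂n n))
    (h1 : IsConn π₁) (h2 : IsConn π₂)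
    (hord : ∀ n, OrdBelow (π₁n n) (π₂n n))
    (hc1 : M1Conv π₁n π₁) (hc2 : M1Conv π₂n π₂) :
    Lo π₁ ∩ Rbar π₂ = ∅ ∧ Lbar π₁ ∩ Ro π₂ = ∅ := by
  exact ⟨part_one h1n hord hc1 hc2, part_two h2n hord hc1 hc2⟩

end PathsPaper
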